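/- arXiv:1306.1929 — 2 statements merged into one kernel-verified Lean document; each statement's English description precedes it below -/
import Mathlib

section
/- Let d ≥ 1 and let G : S_d → ℝ be monotone and sublinear. Then there exists a nonempty, bounded, closed and convex subset Γ ⊂ S_d⁺ such that G(A) = (1/2) · sup_{γ ∈ Γ} tr(γA) for every A ∈ S_d. -/
open Matrix
open scoped Matrix.Norms.L2Operator

section Aux

variable {d : ℕ}

/-- the linear map `γ ↦ trace (γ * B)` -/
private noncomputable def trMulLM (B : Matrix (Fin d) (Fin d) ℝ) :
    Matrix (Fin d) (Fin d) ℝ →ₗ[ℝ] ℝ :=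
  (Matrix.traceLinearMap (Fin d) ℝ ℝ).comp (LinearMap.mulRight ℝ B)

private lemma trMulLM_apply (B γ : Matrix (Fin d) (Fin d) ℝ) :
    trMulLM B γ = (γ * B).trace := rfl

/-- transpose as a linear map -/
private def transposeLM : Matrix (Fin d) (Fin d) ℝ →ₗ[ℝ] Matrix (Fin d) (Fin d) ℝ where
  toFun X := Xᵀ
  map_add' := by intros; simp
  map_smul' := by intros; simp

private lemma tr_mul_vecMulVec' (γ : Matrix (Fin d) (Fin d) ℝ) (x y : Fin d → ℝ) :
    (γ * Matrix.vecMulVec x y).trace = y ⬝ᵥ γ *ᵥ x := by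
  classical
  simp only [Matrix.trace, Matrix.diag_apply, Matrix.mul_apply, Matrix.vecMulVec_apply,
    dotProduct, Matrix.mulVec, Finset.mul_sum]
  refine Finset.sum_congr rfl fun i _ => ?_
  refine Finset.sum_congr rfl fun j _ => ?_
  ring

private lemma vecMulVec_self_isSymm (x : Fin d → ℝ) : (Matrix.vecMulVec x x).IsSymm := by
  apply Matrix.IsSymm.ext
  intro i j
  simp [Matrix.vecMulVec_apply, mul_comm]

private lemma vecMulVec_self_posSemidef (x : Fin d → ℝ) :
    (Matrix.vecMulVec x x).PosSemidef := by
  classical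
  apply Matrix.PosSemidef.of_dotProduct_mulVec_nonneg
  · rw [Matrix.IsHermitian, Matrix.conjTranspose_eq_transpose_of_trivial]
    ext i j
    simp [Matrix.vecMulVec_apply, mul_comm]
  · intro y
    have h : dotProduct (star y) (Matrix.vecMulVec x x *ᵥ y)
        = (∑ i, x i * y i) * (∑ i, x i * y i) := by
      rw [Finset.sum_mul_sum]
      simp only [star_trivial, dotProduct, Matrix.mulVec, Matrix.vecMulVec_apply,
        Finset.mul_sum]
      refine Finset.sum_congr rfl fun i _ => ?_
      refine Finset.sum_congr rfl fun j _ => ?_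
      ring
    rw [h]
    exact mul_self_nonneg _

private lemma tr_mul_vecMulVec (γ : Matrix (Fin d) (Fin d) ℝ) (x : Fin d → ℝ) :
    (γ * Matrix.vecMulVec x x).trace = x ⬝ᵥ γ *ᵥ x :=
  tr_mul_vecMulVec' γ x x

private lemma trace_mul_stdBasisMatrix (γ : Matrix (Fin d) (Fin d) ℝ) (i j : Fin d) :
    (γ * Matrix.single i j (1 : ℝ)).trace = γ j i := by
  classical
  rw [Matrix.single_eq_single_vecMulVec_single, tr_mul_vecMulVec']
  simp [dotProduct, Matrix.mulVec, Pi.single_apply]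

end Aux

/-- Representation of a monotone sublinear function `G` on the space of
`d × d` real symmetric matrices: there is a nonempty, bounded, closed, convex set
`Γ` of positive semidefinite symmetric matrices with
`G A = (1/2) * sup_{γ ∈ Γ} tr (γ * A)` for all symmetric `A`. -/
theorem representation_of_monotone_sublinear
    (d : ℕ) (hd : 1 ≤ d) (G : Matrix (Fin d) (Fin d) ℝ → ℝ)
    (hmono : ∀ A B : Matrix (Fin d) (Fin d) ℝ,
      A.IsSymm → B.IsSymm → (A - B).PosSemidef → G B ≤ G A)
    (hsub : ∀ A B : Matrix (Fin d) (Fin d) ℝ,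
      A.IsSymm → B.IsSymm → G (A + B) ≤ G A + G B)
    (hpos : ∀ (l : ℝ) (A : Matrix (Fin d) (Fin d) ℝ),
      0 ≤ l → A.IsSymm → G (l • A) = l * G A) :
    ∃ Γ : Set (Matrix (Fin d) (Fin d) ℝ),
      Γ.Nonempty ∧ Bornology.IsBounded Γ ∧ IsClosed Γ ∧ Convex ℝ Γ ∧
      (∀ γ ∈ Γ, γ.IsSymm ∧ γ.PosSemidef) ∧
      (∀ A : Matrix (Fin d) (Fin d) ℝ, A.IsSymm →
        G A = (1 / 2) * sSup ((fun γ => (γ * A).trace) '' Γ)) := by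
  classical
  -- elementary symmetry facts
  have hsymm_smul : ∀ (c : ℝ) (A : Matrix (Fin d) (Fin d) ℝ), A.IsSymm → (c • A).IsSymm := by
    intro c A hA
    rw [Matrix.IsSymm] at hA ⊢
    rw [Matrix.transpose_smul, hA]
  have hsymm_neg : ∀ A : Matrix (Fin d) (Fin d) ℝ, A.IsSymm → (-A).IsSymm := by
    intro A hA
    rw [Matrix.IsSymm] at hA ⊢
    rw [Matrix.transpose_neg, hA]
  have hG0 : G 0 = 0 := by
    have h := hpos 0 0 le_rfl Matrix.isSymm_zero
    simpa using h
  have hGneg : ∀ A : Matrix (Fin d) (Fin d) ℝ, A.IsSymm → -G A ≤ G (-A) := by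
    intro A hA
    have h := hsub A (-A) hA (hsymm_neg A hA)
    rw [add_neg_cancel, hG0] at h
    linarith
  -- the symmetrization and the sublinear extension `N`
  set S : Matrix (Fin d) (Fin d) ℝ → Matrix (Fin d) (Fin d) ℝ :=
    fun X => (1/2 : ℝ) • (X + Xᵀ) with hSdef
  have hS : ∀ X, (S X).IsSymm := by
    intro X
    rw [Matrix.IsSymm, hSdef, Matrix.transpose_smul, Matrix.transpose_add,
      Matrix.transpose_transpose, add_comm]
  have hSA : ∀ A : Matrix (Fin d) (Fin d) ℝ, A.IsSymm → S A = A := by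
    intro A hA
    rw [Matrix.IsSymm] at hA
    rw [hSdef]
    simp only [hA]
    rw [← two_smul ℝ A, smul_smul]
    norm_num
  set N : Matrix (Fin d) (Fin d) ℝ → ℝ := fun X => 2 * G (S X) with hNdef
  have hNsymm : ∀ A : Matrix (Fin d) (Fin d) ℝ, A.IsSymm → N A = 2 * G A := by
    intro A hA; rw [hNdef]; simp only [hSA A hA]
  have hSsmul : ∀ (c : ℝ) (X), S (c • X) = c • S X := by
    intro c X
    rw [hSdef]
    simp only [Matrix.transpose_smul]
    rw [← smul_add, smul_comm]
  have N_hom : ∀ c : ℝ, 0 < c → ∀ X, N (c • X) = c * N X := by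
    intro c hc X
    rw [hNdef]
    simp only [hSsmul]
    rw [hpos c (S X) hc.le (hS X)]
    ring
  have N_add : ∀ X Y, N (X + Y) ≤ N X + N Y := by
    intro X Y
    have hSXY : S (X + Y) = S X + S Y := by
      rw [hSdef]
      simp only [Matrix.transpose_add, ← smul_add]
      congr 1
      abel
    rw [hNdef]
    simp only [hSXY]
    have := hsub (S X) (S Y) (hS X) (hS Y)
    linarith
  -- key Hahn-Banach step
  have key : ∀ A : Matrix (Fin d) (Fin d) ℝ, A.IsSymm →
      ∃ γ : Matrix (Fin d) (Fin d) ℝ,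
        (γ.IsSymm ∧ ∀ B, B.IsSymm → (γ * B).trace ≤ 2 * G B) ∧
        (γ * A).trace = 2 * G A := by
    intro A hA
    have Hc : ∀ c : ℝ, c • A = 0 → c • (2 * G A) = 0 := by
      intro c hc
      rcases smul_eq_zero.mp hc with rfl | rfl
      · simp
      · simp [hG0]
    set f := LinearPMap.mkSpanSingleton' (σ := RingHom.id ℝ) A (2 * G A) Hc with hfdef
    have hf : ∀ x : f.domain, f x ≤ N x := by
      rintro ⟨x, hx⟩
      have hx2 : x ∈ Submodule.span ℝ {A} := hx
      rcases Submodule.mem_span_singleton.mp hx2 with ⟨c, hc⟩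
      subst hc
      rw [show f ⟨c • A, hx⟩ = c • (2 * G A) from
        LinearPMap.mkSpanSingleton'_apply A (2 * G A) Hc c hx]
      show c • (2 * G A) ≤ N (c • A)
      rcases le_or_gt 0 c with h0 | h0
      · rw [hNsymm (c • A) (hsymm_smul c A hA), hpos c A h0 hA]
        simp only [smul_eq_mul]
        ring_nf
        exact le_rfl
      · have h1 : c • A = (-c) • (-A) := by
          rw [smul_neg, neg_smul, neg_neg]
        rw [h1, hNsymm _ (hsymm_smul (-c) (-A) (hsymm_neg A hA)),
          hpos (-c) (-A) (by linarith) (hsymm_neg A hA)]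
        have h2 := hGneg A hA
        simp only [smul_eq_mul]
        nlinarith
    obtain ⟨g, hg_ext, hg_le⟩ := exists_extension_of_le_sublinear f N N_hom N_add hf
    -- matrix representing g
    set γ0 : Matrix (Fin d) (Fin d) ℝ :=
      Matrix.of fun i j => g (Matrix.single j i 1) with hγ0
    have htr : ∀ X : Matrix (Fin d) (Fin d) ℝ, (γ0 * X).trace = g X := by
      intro X
      conv_rhs => rw [Matrix.matrix_eq_sum_single X]
      rw [map_sum]
      have hrw : ∀ i j : Fin d,
          g (Matrix.single i j (X i j)) = X i j * γ0 j i := by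
        intro i j
        have : Matrix.single i j (X i j) = (X i j) • Matrix.single i j (1:ℝ) := by
          rw [Matrix.smul_single, smul_eq_mul, mul_one]
        rw [this, _root_.map_smul, smul_eq_mul]
        rfl
      simp only [map_sum, hrw]
      simp only [Matrix.trace, Matrix.diag_apply, Matrix.mul_apply]
      rw [Finset.sum_comm]
      refine Finset.sum_congr rfl fun i _ => ?_
      refine Finset.sum_congr rfl fun j _ => ?_
      ring
    set γ : Matrix (Fin d) (Fin d) ℝ := (1/2 : ℝ) • (γ0 + γ0ᵀ) with hγdef
    have hγsymm : γ.IsSymm := by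
      rw [Matrix.IsSymm, hγdef, Matrix.transpose_smul, Matrix.transpose_add,
        Matrix.transpose_transpose, add_comm]
    have htrS : ∀ B : Matrix (Fin d) (Fin d) ℝ, B.IsSymm → (γ * B).trace = g B := by
      intro B hB
      have h1 : (γ0ᵀ * B).trace = (γ0 * B).trace := by
        rw [← Matrix.trace_transpose (γ0ᵀ * B), Matrix.transpose_mul,
          Matrix.transpose_transpose, Matrix.IsSymm] at *
        rw [hB]
        rw [Matrix.trace_mul_comm]
      rw [hγdef, Matrix.smul_mul, Matrix.add_mul, Matrix.trace_smul, Matrix.trace_add, h1,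
        htr B]
      simp only [smul_eq_mul]
      ring
    refine ⟨γ, ⟨hγsymm, ?_⟩, ?_⟩
    · intro B hB
      rw [htrS B hB]
      calc g B ≤ N B := hg_le B
        _ = 2 * G B := hNsymm B hB
    · rw [htrS A hA]
      have hmem : A ∈ f.domain := by
        rw [hfdef, LinearPMap.domain_mkSpanSingleton]
        exact Submodule.mem_span_singleton_self A
      have h2 : g A = f ⟨A, hmem⟩ := hg_ext ⟨A, hmem⟩
      rw [h2]
      exact LinearPMap.mkSpanSingleton'_apply_self A (2 * G A) Hc hmem
  -- the representing set
  set Γ : Set (Matrix (Fin d) (Fin d) ℝ) :=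
    {γ | γ.IsSymm ∧ ∀ B, B.IsSymm → (γ * B).trace ≤ 2 * G B} with hΓdef
  -- nonempty
  obtain ⟨γ₁, hγ₁, _⟩ := key 0 Matrix.isSymm_zero
  have hne : Γ.Nonempty := ⟨γ₁, hγ₁⟩
  -- symmetric matrices used for entry bounds
  set P : Fin d → Fin d → Matrix (Fin d) (Fin d) ℝ :=
    fun i j => Matrix.single i j (1:ℝ) + Matrix.single j i 1 with hPdef
  have hPsymm : ∀ i j, (P i j).IsSymm := by
    intro i j
    apply Matrix.IsSymm.ext
    intro a b
    simp only [hPdef, Matrix.transpose_apply, Matrix.add_apply, Matrix.single,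
      Matrix.of_apply, and_comm]
    exact add_comm _ _
  have htrP : ∀ γ : Matrix (Fin d) (Fin d) ℝ, γ.IsSymm → ∀ i j,
      (γ * P i j).trace = 2 * γ i j := by
    intro γ hγ i j
    rw [hPdef]
    simp only [Matrix.mul_add, Matrix.trace_add, trace_mul_stdBasisMatrix]
    rw [hγ.apply i j]
    ring
  -- entry bound
  set c : ℝ := ∑ i : Fin d, ∑ j : Fin d, (|G (P i j)| + |G (-(P i j))|) with hcdef
  have hc0 : 0 ≤ c := by
    apply Finset.sum_nonneg; intro i _
    apply Finset.sum_nonneg; intro j _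
    positivity
  have hterm_le : ∀ i j : Fin d, |G (P i j)| + |G (-(P i j))| ≤ c := by
    intro i j
    calc |G (P i j)| + |G (-(P i j))|
        ≤ ∑ j' : Fin d, (|G (P i j')| + |G (-(P i j'))|) := by
          apply Finset.single_le_sum (f := fun j' => |G (P i j')| + |G (-(P i j'))|)
          · intro j' _; positivity
          · exact Finset.mem_univ j
      _ ≤ c := by
          rw [hcdef]
          apply Finset.single_le_sum
            (f := fun i' => ∑ j' : Fin d, (|G (P i' j')| + |G (-(P i' j'))|))
          · intro i' _
            apply Finset.sum_nonneg; intro j' _; positivity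
          · exact Finset.mem_univ i
  have hentry : ∀ γ ∈ Γ, ∀ i j, |γ i j| ≤ c := by
    intro γ hγ i j
    obtain ⟨hγs, hγb⟩ := hγ
    have h1 : 2 * γ i j ≤ 2 * G (P i j) := by
      rw [← htrP γ hγs i j]; exact hγb (P i j) (hPsymm i j)
    have h2 : -(2 * γ i j) ≤ 2 * G (-(P i j)) := by
      have := hγb (-(P i j)) (hsymm_neg _ (hPsymm i j))
      rw [Matrix.mul_neg, Matrix.trace_neg, htrP γ hγs i j] at this
      linarith
    have h3 := hterm_le i j
    have h4 : G (P i j) ≤ |G (P i j)| := le_abs_self _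
    have h5 : G (-(P i j)) ≤ |G (-(P i j))| := le_abs_self _
    have h6 : 0 ≤ |G (P i j)| := abs_nonneg _
    have h7 : 0 ≤ |G (-(P i j))| := abs_nonneg _
    rw [abs_le]
    constructor <;> linarith
  -- boundedness
  have hbdd : Bornology.IsBounded Γ := by
    rw [Metric.isBounded_iff_subset_closedBall 0]
    refine ⟨(d : ℝ) * ((d : ℝ) * c), fun γ hγ => ?_⟩
    rw [Metric.mem_closedBall, dist_zero_right]
    rw [Matrix.l2_opNorm_def]
    refine ContinuousLinearMap.opNorm_le_bound _ (by positivity) fun x => ?_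
    -- coordinates of the image vector
    have hcoord : ∀ i : Fin d,
        |((Matrix.toEuclideanLin (𝕜 := ℝ) (m := Fin d) (n := Fin d)).trans
          LinearMap.toContinuousLinearMap γ) x i| ≤ (d : ℝ) * c * ‖x‖ := by
      intro i
      have hxj : ∀ j : Fin d, |x j| ≤ ‖x‖ := by
        intro j
        rw [EuclideanSpace.norm_eq, ← Real.sqrt_sq_eq_abs]
        apply Real.sqrt_le_sqrt
        have hxx : x j ^ 2 = ‖x j‖ ^ 2 := by rw [Real.norm_eq_abs, sq_abs]
        rw [hxx]
        exact Finset.single_le_sum (f := fun j' => ‖x j'‖ ^ 2)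
          (fun _ _ => by positivity) (Finset.mem_univ j)
      have happ : ((Matrix.toEuclideanLin (𝕜 := ℝ) (m := Fin d) (n := Fin d)).trans
          LinearMap.toContinuousLinearMap γ) x i = ∑ j, γ i j * x j := by
        rfl
      rw [happ]
      calc |∑ j, γ i j * x j| ≤ ∑ j, |γ i j * x j| := Finset.abs_sum_le_sum_abs _ _
        _ ≤ ∑ _j : Fin d, c * ‖x‖ := by
            apply Finset.sum_le_sum
            intro j _
            rw [abs_mul]
            exact mul_le_mul (hentry γ hγ i j) (hxj j) (abs_nonneg _) hc0
        _ = (d : ℝ) * c * ‖x‖ := by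
            rw [Finset.sum_const, Finset.card_univ, Fintype.card_fin]
            push_cast; ring
    rw [EuclideanSpace.norm_eq]
    have hle : ∑ i : Fin d,
        ‖((Matrix.toEuclideanLin (𝕜 := ℝ) (m := Fin d) (n := Fin d)).trans
          LinearMap.toContinuousLinearMap γ) x i‖ ^ 2
        ≤ (d : ℝ) * ((d : ℝ) * c * ‖x‖) ^ 2 := by
      calc ∑ i : Fin d, ‖((Matrix.toEuclideanLin (𝕜 := ℝ) (m := Fin d) (n := Fin d)).trans
          LinearMap.toContinuousLinearMap γ) x i‖ ^ 2
          ≤ ∑ _i : Fin d, ((d : ℝ) * c * ‖x‖) ^ 2 := by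
            apply Finset.sum_le_sum
            intro i _
            rw [Real.norm_eq_abs]
            exact pow_le_pow_left₀ (abs_nonneg _) (hcoord i) 2
        _ = (d : ℝ) * ((d : ℝ) * c * ‖x‖) ^ 2 := by
            rw [Finset.sum_const, Finset.card_univ, Fintype.card_fin, nsmul_eq_mul]
    calc Real.sqrt (∑ i : Fin d,
        ‖((Matrix.toEuclideanLin (𝕜 := ℝ) (m := Fin d) (n := Fin d)).trans
          LinearMap.toContinuousLinearMap γ) x i‖ ^ 2)
        ≤ Real.sqrt (((d : ℝ) * ((d : ℝ) * c * ‖x‖)) ^ 2) := by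
          apply Real.sqrt_le_sqrt
          calc _ ≤ (d : ℝ) * ((d : ℝ) * c * ‖x‖) ^ 2 := hle
            _ ≤ ((d : ℝ) * ((d : ℝ) * c * ‖x‖)) ^ 2 := by
              have hd1 : (1 : ℝ) ≤ (d : ℝ) := by exact_mod_cast hd
              nlinarith [sq_nonneg ((d : ℝ) * c * ‖x‖), norm_nonneg x]
      _ = (d : ℝ) * ((d : ℝ) * c * ‖x‖) := by
          rw [Real.sqrt_sq (by positivity)]
      _ = (d : ℝ) * ((d : ℝ) * c) * ‖x‖ := by ring
  -- closedness
  have hclosed : IsClosed Γ := by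
    have hΓeq : Γ = {γ : Matrix (Fin d) (Fin d) ℝ | γᵀ = γ} ∩
        ⋂ (B : Matrix (Fin d) (Fin d) ℝ), ⋂ (_ : B.IsSymm),
          {γ : Matrix (Fin d) (Fin d) ℝ | trMulLM B γ ≤ 2 * G B} := by
      ext γ
      simp only [hΓdef, Set.mem_setOf_eq, Set.mem_inter_iff, Set.mem_iInter, trMulLM_apply]
      rfl
    rw [hΓeq]
    refine IsClosed.inter ?_ ?_
    · exact isClosed_eq (transposeLM (d := d)).continuous_of_finiteDimensional continuous_id
    · exact isClosed_iInter fun B => isClosed_iInter fun _ =>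
        isClosed_le (trMulLM B).continuous_of_finiteDimensional continuous_const
  -- convexity
  have hconv : Convex ℝ Γ := by
    intro γ₁ h1 γ₂ h2 a b ha hb hab
    refine ⟨?_, ?_⟩
    · rw [Matrix.IsSymm]
      rw [Matrix.transpose_add, Matrix.transpose_smul, Matrix.transpose_smul, h1.1, h2.1]
    · intro B hB
      have hexp : ((a • γ₁ + b • γ₂) * B).trace
          = a * (γ₁ * B).trace + b * (γ₂ * B).trace := by
        rw [Matrix.add_mul, Matrix.smul_mul, Matrix.smul_mul, Matrix.trace_add,
          Matrix.trace_smul, Matrix.trace_smul]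
        simp
      rw [hexp]
      have b1 := h1.2 B hB
      have b2 := h2.2 B hB
      have hsum : a * (2 * G B) + b * (2 * G B) = 2 * G B := by
        have h' : a * (2 * G B) + b * (2 * G B) = (a + b) * (2 * G B) := by ring
        rw [h', hab, one_mul]
      linarith [mul_le_mul_of_nonneg_left b1 ha, mul_le_mul_of_nonneg_left b2 hb]
  -- positivity
  have hpsd : ∀ γ ∈ Γ, γ.IsSymm ∧ γ.PosSemidef := by
    intro γ hγ
    refine ⟨hγ.1, Matrix.PosSemidef.of_dotProduct_mulVec_nonneg ?_ ?_⟩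
    · rw [Matrix.IsHermitian, Matrix.conjTranspose_eq_transpose_of_trivial]
      exact hγ.1
    · intro x
      have h1 : (γ * (-(Matrix.vecMulVec x x))).trace ≤ 2 * G (-(Matrix.vecMulVec x x)) :=
        hγ.2 _ (hsymm_neg _ (vecMulVec_self_isSymm x))
      have h2 : G (-(Matrix.vecMulVec x x)) ≤ G 0 := by
        apply hmono 0 _ Matrix.isSymm_zero (hsymm_neg _ (vecMulVec_self_isSymm x))
        rw [zero_sub, neg_neg]
        exact vecMulVec_self_posSemidef x
      rw [Matrix.mul_neg, Matrix.trace_neg, tr_mul_vecMulVec] at h1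
      rw [hG0] at h2
      simp only [star_trivial]
      linarith
  -- the representation
  refine ⟨Γ, hne, hbdd, hclosed, hconv, hpsd, ?_⟩
  intro A hA
  obtain ⟨γA, hγA, htrA⟩ := key A hA
  have himg_ne : ((fun γ => (γ * A).trace) '' Γ).Nonempty :=
    ⟨(γA * A).trace, ⟨γA, hγA, rfl⟩⟩
  have hub : ∀ y ∈ (fun γ => (γ * A).trace) '' Γ, y ≤ 2 * G A := by
    rintro y ⟨γ, hγ, rfl⟩
    exact hγ.2 A hA
  have hsup : sSup ((fun γ => (γ * A).trace) '' Γ) = 2 * G A := by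
    apply le_antisymm
    · exact csSup_le himg_ne hub
    · refine le_csSup ⟨2 * G A, fun y hy => hub y hy⟩ ⟨γA, hγA, htrA⟩
  rw [hsup]
  ring
end

section
/- Let d ≥ 1, T > 0, and let G : S_d → ℝ be monotone and sublinear, and suppose moreover that G(A) + G(−A) > 0 for every A ∈ S_d with A ≠ 0. Let f : [0,T]×ℝ×ℝ^d → ℝ and g_ij : [0,T]×ℝ×ℝ^d → ℝ (1 ≤ i, j ≤ d) with g_ij = g_ji. Then condition (som-eq2) holds if and only if f and all the g_ij are independent of y, i.e., f(t,y,z) = f(t,y′,z) and g_ij(t,y,z) = g_ij(t,y′,z) for all t ∈ [0,T], y, y′ ∈ ℝ, z ∈ ℝ^d and all i, j. -/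
open Matrix

/-- If `G` is monotone, sublinear and strictly nondegenerate
(`G A + G (-A) > 0` for all symmetric `A ≠ 0`), then condition (som-eq2) holds
if and only if `f` and all the `g i j` are independent of `y`. -/
theorem someq2_iff_independent_of_y
    (d : ℕ) (hd : 1 ≤ d) (T : ℝ) (hT : 0 < T)
    (G : Matrix (Fin d) (Fin d) ℝ → ℝ)
    (hmono : ∀ A B : Matrix (Fin d) (Fin d) ℝ,
      A.IsSymm → B.IsSymm → (A - B).PosSemidef → G B ≤ G A)
    (hsub : ∀ A B : Matrix (Fin d) (Fin d) ℝ,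
      A.IsSymm → B.IsSymm → G (A + B) ≤ G A + G B)
    (hpos : ∀ (l : ℝ) (A : Matrix (Fin d) (Fin d) ℝ),
      0 ≤ l → A.IsSymm → G (l • A) = l * G A)
    (hnondeg : ∀ A : Matrix (Fin d) (Fin d) ℝ, A.IsSymm → A ≠ 0 →
      0 < G A + G (-A))
    (f : ℝ → ℝ → (Fin d → ℝ) → ℝ)
    (g : Fin d → Fin d → ℝ → ℝ → (Fin d → ℝ) → ℝ)
    (hgsymm : ∀ i j, g i j = g j i) :
    (∀ t ∈ Set.Icc (0 : ℝ) T, ∀ (y y' : ℝ) (z : Fin d → ℝ),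
        f t y z - f t y' z +
          2 * G (Matrix.of fun i j => g i j t y z - g i j t y' z) = 0) ↔
    (∀ t ∈ Set.Icc (0 : ℝ) T, ∀ (y y' : ℝ) (z : Fin d → ℝ),
        f t y z = f t y' z ∧ ∀ i j, g i j t y z = g i j t y' z) := by
  have hG0 : G 0 = 0 := by
    have h := hpos 0 0 le_rfl (by simp [Matrix.IsSymm])
    simpa using h
  constructor
  · intro h t ht y y' z
    set A : Matrix (Fin d) (Fin d) ℝ :=
      Matrix.of fun i j => g i j t y z - g i j t y' z with hA
    have hAsymm : A.IsSymm := by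
      ext i j
      simp [hA, Matrix.transpose_apply, hgsymm i j]
    have hAneg : (Matrix.of fun i j => g i j t y' z - g i j t y z) = -A := by
      ext i j
      simp [hA]
    have h1 := h t ht y y' z
    rw [← hA] at h1
    have h2 := h t ht y' y z
    rw [hAneg] at h2
    have hsum : G A + G (-A) = 0 := by linarith
    have hA0 : A = 0 := by
      by_contra hne
      have := hnondeg A hAsymm hne
      linarith
    have hg : ∀ i j, g i j t y z = g i j t y' z := by
      intro i j
      have : A i j = 0 := by rw [hA0]; rfl
      simp [hA] at this
      linarith
    refine ⟨?_, hg⟩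
    rw [hA0, hG0] at h1
    linarith
  · intro h t ht y y' z
    obtain ⟨hf, hg⟩ := h t ht y y' z
    have : (Matrix.of fun i j => g i j t y z - g i j t y' z) = 0 := by
      ext i j
      simp [hg i j]
    rw [this, hG0, hf]
    ring
end
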